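/- The function F_1^*(t,r) = (T-t)(7(T-t)^2 - 15r^2)/(5r^2 + 3(T-t)^2)^3 solves the linearized equation (∂_t^2 - ∂_r^2 - (6/r)∂_r)u(t,r) = 2 u_T^*(t,r) u(t,r) for all (t,r) ≠ (T,0), r > 0, where u_T^*(t,r) = 24(21(T-t)^2 - 5r^2)/(3(T-t)^2 + 5r^2)^2. -/

import Mathlib

private lemma hsub (T t : ℝ) : HasDerivAt (fun t' : ℝ => T - t') (-1) t := by
  simpa using (hasDerivAt_id t).const_sub T

/-- first t-derivative -/
private lemma l1 (T r t : ℝ) (h : 5 * r ^ 2 + 3 * (T - t) ^ 2 ≠ 0) :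
    HasDerivAt (fun t' => (T - t') * (7 * (T - t') ^ 2 - 15 * r ^ 2) /
        (5 * r ^ 2 + 3 * (T - t') ^ 2) ^ 3)
      ((75 * r ^ 4 - 330 * (T - t) ^ 2 * r ^ 2 + 63 * (T - t) ^ 4) /
        (5 * r ^ 2 + 3 * (T - t) ^ 2) ^ 4) t := by
  have hs := hsub T t
  have hN := hs.mul (((hs.pow 2).const_mul 7).sub_const (15 * r ^ 2))
  have hD := ((hs.pow 2).const_mul 3).const_add (5 * r ^ 2)
  have := hN.div (hD.pow 3) (pow_ne_zero 3 h)
  refine this.congr_deriv ?_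
  simp only [Pi.pow_apply, Pi.mul_apply, Pi.add_apply, Pi.sub_apply, Pi.div_apply, id, Nat.cast_ofNat]
  norm_num only
  rw [div_eq_div_iff (pow_ne_zero _ (pow_ne_zero _ h)) (pow_ne_zero _ h)]
  ring

/-- second t-derivative -/
private lemma l2 (T r t : ℝ) (h : 5 * r ^ 2 + 3 * (T - t) ^ 2 ≠ 0) :
    HasDerivAt (fun t' => (75 * r ^ 4 - 330 * (T - t') ^ 2 * r ^ 2 + 63 * (T - t') ^ 4) /
        (5 * r ^ 2 + 3 * (T - t') ^ 2) ^ 4)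
      ((5100 * (T - t) * r ^ 4 - 7200 * (T - t) ^ 3 * r ^ 2 + 756 * (T - t) ^ 5) /
        (5 * r ^ 2 + 3 * (T - t) ^ 2) ^ 5) t := by
  have hs := hsub T t
  have hN := ((((hs.pow 2).const_mul 330).mul_const (r ^ 2)).const_sub (75 * r ^ 4)).add
    ((hs.pow 4).const_mul 63)
  have hD := ((hs.pow 2).const_mul 3).const_add (5 * r ^ 2)
  have := hN.div (hD.pow 4) (pow_ne_zero 4 h)
  refine this.congr_deriv ?_
  simp only [Pi.pow_apply, Pi.mul_apply, Pi.add_apply, Pi.sub_apply, Pi.div_apply, id, Nat.cast_ofNat]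
  norm_num only
  rw [div_eq_div_iff (pow_ne_zero _ (pow_ne_zero _ h)) (pow_ne_zero _ h)]
  ring

/-- first r-derivative -/
private lemma l3 (T t r : ℝ) (h : 5 * r ^ 2 + 3 * (T - t) ^ 2 ≠ 0) :
    HasDerivAt (fun r' => (T - t) * (7 * (T - t) ^ 2 - 15 * r' ^ 2) /
        (5 * r' ^ 2 + 3 * (T - t) ^ 2) ^ 3)
      ((300 * (T - t) * r ^ 3 - 300 * (T - t) ^ 3 * r) /
        (5 * r ^ 2 + 3 * (T - t) ^ 2) ^ 4) r := by
  have hN := (((hasDerivAt_pow 2 r).const_mul 15).const_sub (7 * (T - t) ^ 2)).const_mul (T - t)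
  have hD := ((hasDerivAt_pow 2 r).const_mul 5).add_const (3 * (T - t) ^ 2)
  have := hN.div (hD.pow 3) (pow_ne_zero 3 h)
  refine this.congr_deriv ?_
  simp only [Pi.pow_apply, Pi.mul_apply, Pi.add_apply, Pi.sub_apply, Pi.div_apply, id, Nat.cast_ofNat]
  norm_num only
  rw [div_eq_div_iff (pow_ne_zero _ (pow_ne_zero _ h)) (pow_ne_zero _ h)]
  ring

/-- second r-derivative -/
private lemma l4 (T t r : ℝ) (h : 5 * r ^ 2 + 3 * (T - t) ^ 2 ≠ 0) :
    HasDerivAt (fun r' => (300 * (T - t) * r' ^ 3 - 300 * (T - t) ^ 3 * r') /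
        (5 * r' ^ 2 + 3 * (T - t) ^ 2) ^ 4)
      ((-7500 * (T - t) * r ^ 4 + 13200 * (T - t) ^ 3 * r ^ 2 - 900 * (T - t) ^ 5) /
        (5 * r ^ 2 + 3 * (T - t) ^ 2) ^ 5) r := by
  have hN := ((hasDerivAt_pow 3 r).const_mul (300 * (T - t))).sub
    ((hasDerivAt_id r).const_mul (300 * (T - t) ^ 3))
  have hD := ((hasDerivAt_pow 2 r).const_mul 5).add_const (3 * (T - t) ^ 2)
  have := hN.div (hD.pow 4) (pow_ne_zero 4 h)
  refine this.congr_deriv ?_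
  simp only [Pi.pow_apply, Pi.mul_apply, Pi.add_apply, Pi.sub_apply, Pi.div_apply, id, Nat.cast_ofNat]
  norm_num only
  rw [div_eq_div_iff (pow_ne_zero _ (pow_ne_zero _ h)) (pow_ne_zero _ h)]
  ring

/-- `F_1^*(t,r) = (T-t)(7(T-t)² - 15r²)/(5r² + 3(T-t)²)³` solves the equation obtained
by linearizing the radial quadratic wave equation in `d = 7` around `u_T^*`. -/
theorem F1star_solves_linearized (T : ℝ) (hT : 0 < T) (uStar F : ℝ → ℝ → ℝ)
    (huStar : ∀ t r : ℝ, uStar t r = 24 * (21 * (T - t) ^ 2 - 5 * r ^ 2) /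
      (3 * (T - t) ^ 2 + 5 * r ^ 2) ^ 2)
    (hF : ∀ t r : ℝ, F t r = (T - t) * (7 * (T - t) ^ 2 - 15 * r ^ 2) /
      (5 * r ^ 2 + 3 * (T - t) ^ 2) ^ 3) :
    ∀ t r : ℝ, 0 < r → (t, r) ≠ (T, 0) →
      deriv (deriv (fun t' => F t' r)) t - deriv (deriv (fun r' => F t r')) r
        - (6 / r) * deriv (fun r' => F t r') r = 2 * uStar t r * F t r := by
  intro t r hr _hne
  have hr0 : r ≠ 0 := ne_of_gt hr
  have hDpos : ∀ t'' : ℝ, (0:ℝ) < 5 * r ^ 2 + 3 * (T - t'') ^ 2 := by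
    intro t''
    nlinarith [sq_nonneg (T - t''), mul_pos hr hr, sq_abs r]
  have hD : 5 * r ^ 2 + 3 * (T - t) ^ 2 ≠ 0 := ne_of_gt (hDpos t)
  -- the t-derivative as a function
  have e1 : (fun t' => F t' r) = fun t' => (T - t') * (7 * (T - t') ^ 2 - 15 * r ^ 2) /
      (5 * r ^ 2 + 3 * (T - t') ^ 2) ^ 3 := funext fun t' => hF t' r
  have h1 : deriv (fun t' => F t' r) = fun t'' =>
      (75 * r ^ 4 - 330 * (T - t'') ^ 2 * r ^ 2 + 63 * (T - t'') ^ 4) /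
        (5 * r ^ 2 + 3 * (T - t'') ^ 2) ^ 4 := by
    funext t''
    rw [e1]
    exact (l1 T r t'' (ne_of_gt (hDpos t''))).deriv
  have h2 : deriv (deriv (fun t' => F t' r)) t =
      (5100 * (T - t) * r ^ 4 - 7200 * (T - t) ^ 3 * r ^ 2 + 756 * (T - t) ^ 5) /
        (5 * r ^ 2 + 3 * (T - t) ^ 2) ^ 5 := by
    rw [h1]
    exact (l2 T r t hD).deriv
  -- the r-derivative at r
  have e2 : (fun r' => F t r') = fun r' => (T - t) * (7 * (T - t) ^ 2 - 15 * r' ^ 2) /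
      (5 * r' ^ 2 + 3 * (T - t) ^ 2) ^ 3 := funext fun r' => hF t r'
  have h3 : deriv (fun r' => F t r') r =
      (300 * (T - t) * r ^ 3 - 300 * (T - t) ^ 3 * r) /
        (5 * r ^ 2 + 3 * (T - t) ^ 2) ^ 4 := by
    rw [e2]
    exact (l3 T t r hD).deriv
  -- second r-derivative via eventual equality
  have hev : deriv (fun r' => F t r') =ᶠ[nhds r] fun r' =>
      (300 * (T - t) * r' ^ 3 - 300 * (T - t) ^ 3 * r') /
        (5 * r' ^ 2 + 3 * (T - t) ^ 2) ^ 4 := by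
    filter_upwards [eventually_gt_nhds hr] with x hx
    have hDx : 5 * x ^ 2 + 3 * (T - t) ^ 2 ≠ 0 := by
      have : (0:ℝ) < 5 * x ^ 2 + 3 * (T - t) ^ 2 := by
        nlinarith [sq_nonneg (T - t), mul_pos hx hx]
      exact ne_of_gt this
    rw [e2]
    exact (l3 T t x hDx).deriv
  have h4 : deriv (deriv (fun r' => F t r')) r =
      (-7500 * (T - t) * r ^ 4 + 13200 * (T - t) ^ 3 * r ^ 2 - 900 * (T - t) ^ 5) /
        (5 * r ^ 2 + 3 * (T - t) ^ 2) ^ 5 := by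
    rw [hev.deriv_eq]
    exact (l4 T t r hD).deriv
  rw [h2, h3, h4, huStar, hF]
  have hD' : 3 * (T - t) ^ 2 + 5 * r ^ 2 ≠ 0 := by
    rw [add_comm]; exact hD
  field_simp
  ring
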